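/- Let N, K ≥ 1 and let Ψ ∈ ℂ^N ⊗ ℂ^K be a graph coloring state with amplitudes α_v, β_{v,j}. Suppose for every vertex v with |α_v|² ≥ 1/(8N) there exists a color j̃(v) with |β_{v,j̃(v)}|² ≥ (100K−1)/(100K). Then for every color j ∈ {0,…,K−1}, the probability p_j(Ψ) of measuring j in the color register of (I_N ⊗ F_K)Ψ satisfies p_j(Ψ) ≥ 1/(4K). -/

import Mathlib

open Finset Real in
/-- Blier–Tapp Lemma 3.5: if every heavy vertex (`|α_v|² ≥ 1/(8N)`) has an almost-deterministic
color (`|β_{v,j̃}|² ≥ (100K−1)/(100K)` for some `j̃`), then every color `j` is measured in the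
color register of `(I_N ⊗ F_K)Ψ` with probability at least `1/(4K)`. -/
theorem stmt_15 {N K : ℕ} (hN : 0 < N) (hK : 0 < K)
    (α : Fin N → ℂ) (β : Fin N → Fin K → ℂ)
    (hα : ∑ v, ‖α v‖ ^ 2 = 1) (hβ : ∀ v, ∑ j, ‖β v j‖ ^ 2 = 1)
    (hheavy : ∀ v : Fin N, 1 / (8 * N) ≤ ‖α v‖ ^ 2 →
      ∃ jt : Fin K, (100 * K - 1) / (100 * K) ≤ ‖β v jt‖ ^ 2) :
    ∀ j : Fin K,
      (1 : ℝ) / (4 * K) ≤ ∑ v, ‖α v‖ ^ 2 *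
        (((1 : ℝ) / K) * ‖∑ j' : Fin K,
          β v j' * Complex.exp (2 * Real.pi * Complex.I * ((j' : ℕ) * (j : ℕ) / K))‖ ^ 2) := by
  intro j
  have hKr : (0:ℝ) < K := by exact_mod_cast hK
  have hNr : (0:ℝ) < N := by exact_mod_cast hN
  set c : Fin K → ℂ := fun j' =>
    Complex.exp (2 * Real.pi * Complex.I * ((j' : ℕ) * (j : ℕ) / K)) with hc
  have hcnorm : ∀ j', ‖c j'‖ = 1 := by
    intro j'
    have h1 : (2 * (Real.pi:ℂ) * Complex.I * (((j' : ℕ):ℂ) * ((j : ℕ):ℂ) / (K:ℂ)))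
        = ((2*Real.pi*(((j':ℕ):ℝ)*((j:ℕ):ℝ)/(K:ℝ)) : ℝ) : ℂ) * Complex.I := by
      push_cast; ring
    rw [hc]
    simp only [h1, Complex.norm_exp_ofReal_mul_I]
  -- inner bound for heavy vertices
  have key : ∀ v, (1:ℝ)/(8*N) ≤ ‖α v‖^2 → (4/5:ℝ) ≤ ‖∑ j', β v j' * c j'‖^2 := by
    intro v hv
    obtain ⟨jt, hjt⟩ := hheavy v hv
    set a := ‖β v jt‖ with haa
    have ha0 : 0 ≤ a := norm_nonneg _
    have hrest2 : ∑ j' ∈ univ.erase jt, ‖β v j'‖^2 = 1 - a^2 := by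
      have h := hβ v
      rw [← Finset.add_sum_erase _ _ (mem_univ jt)] at h
      linarith
    have ha1 : a ≤ 1 := by
      nlinarith [Finset.sum_nonneg (fun i (_ : i ∈ univ.erase jt) => sq_nonneg ‖β v i‖)]
    have ha2 : (99/100:ℝ) ≤ a^2 := by
      have h100 : (99/100:ℝ) ≤ (100 * K - 1) / (100 * K) := by
        rw [le_div_iff₀ (by positivity)]
        have : (1:ℝ) ≤ K := by exact_mod_cast hK
        nlinarith
      linarith
    have hrest_small : 1 - a^2 ≤ 1/(100*K) := by
      have heq : (100 * (K:ℝ) - 1) / (100 * K) = 1 - 1/(100*K) := by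
        field_simp
      rw [heq] at hjt
      linarith
    set s := ∑ j' ∈ univ.erase jt, ‖β v j'‖ with hss
    have hs0 : 0 ≤ s := Finset.sum_nonneg fun i _ => norm_nonneg _
    have hs2 : s^2 ≤ (1/100 : ℝ) := by
      have hcs := sq_sum_le_card_mul_sum_sq (s := univ.erase jt)
        (f := fun j' => ‖β v j'‖)
      rw [hrest2] at hcs
      have hcard : ((univ.erase jt).card : ℝ) ≤ K := by
        have h2 : (univ.erase jt).card ≤ K := by
          simpa using Finset.card_erase_le (s := (univ : Finset (Fin K))) (a := jt)
        exact_mod_cast h2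
      have h1a : (0:ℝ) ≤ 1 - a^2 := by
        rw [← hrest2]; exact Finset.sum_nonneg fun i _ => sq_nonneg _
      calc s^2 ≤ ((univ.erase jt).card : ℝ) * (1 - a^2) := hcs
        _ ≤ (K:ℝ) * (1/(100*K)) := mul_le_mul hcard hrest_small h1a hKr.le
        _ = 1/100 := by field_simp
    have hs : s ≤ 1/10 := by nlinarith
    have htri : a - s ≤ ‖∑ j', β v j' * c j'‖ := by
      have hsplit : ∑ j', β v j' * c j'
          = β v jt * c jt + ∑ j' ∈ univ.erase jt, β v j' * c j' :=
        (Finset.add_sum_erase _ _ (mem_univ jt)).symm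
      have h1 : ‖β v jt * c jt‖ = a := by rw [norm_mul, hcnorm, mul_one]
      have h2 : ‖∑ j' ∈ univ.erase jt, β v j' * c j'‖ ≤ s := by
        refine (norm_sum_le _ _).trans (le_of_eq ?_)
        exact Finset.sum_congr rfl fun i _ => by rw [norm_mul, hcnorm, mul_one]
      have h3 : ‖β v jt * c jt‖ ≤
          ‖∑ j', β v j' * c j'‖ + ‖∑ j' ∈ univ.erase jt, β v j' * c j'‖ := by
        have heq : β v jt * c jt
            = (∑ j', β v j' * c j') - ∑ j' ∈ univ.erase jt, β v j' * c j' := by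
          rw [hsplit]; ring
        rw [heq]
        exact norm_sub_le _ _
      rw [h1] at h3
      linarith
    have has : 0 ≤ a - s := by nlinarith
    have hsq := pow_le_pow_left₀ has htri 2
    nlinarith
  -- heavy set carries mass ≥ 7/8
  set S : Finset (Fin N) := univ.filter (fun v => (1:ℝ)/(8*N) ≤ ‖α v‖^2) with hS
  have hSmass : (7/8 : ℝ) ≤ ∑ v ∈ S, ‖α v‖^2 := by
    have hsplit := Finset.sum_filter_add_sum_filter_not univ
      (fun v => (1:ℝ)/(8*N) ≤ ‖α v‖^2) (fun v => ‖α v‖^2)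
    rw [hα] at hsplit
    have hlight : ∑ v ∈ univ.filter (fun v => ¬ ((1:ℝ)/(8*N) ≤ ‖α v‖^2)), ‖α v‖^2
        ≤ 1/8 := by
      calc ∑ v ∈ univ.filter (fun v => ¬ ((1:ℝ)/(8*N) ≤ ‖α v‖^2)), ‖α v‖^2
          ≤ ∑ _v ∈ univ.filter (fun v => ¬ ((1:ℝ)/(8*N) ≤ ‖α v‖^2)), (1:ℝ)/(8*N) := by
            refine Finset.sum_le_sum fun i hi => ?_
            have := (Finset.mem_filter.mp hi).2
            linarith [lt_of_not_ge this]
        _ = ((univ.filter (fun v => ¬ ((1:ℝ)/(8*N) ≤ ‖α v‖^2))).card : ℝ) * (1/(8*N)) := by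
            rw [Finset.sum_const, nsmul_eq_mul]
        _ ≤ (N:ℝ) * (1/(8*N)) := by
            have hcard : (univ.filter (fun v => ¬ ((1:ℝ)/(8*N) ≤ ‖α v‖^2))).card ≤ N := by
              calc (univ.filter (fun v => ¬ ((1:ℝ)/(8*N) ≤ ‖α v‖^2))).card
                  ≤ (univ : Finset (Fin N)).card := Finset.card_filter_le _ _
                _ = N := by simp
            have : ((univ.filter (fun v => ¬ ((1:ℝ)/(8*N) ≤ ‖α v‖^2))).card : ℝ) ≤ N := by
              exact_mod_cast hcard
            exact mul_le_mul_of_nonneg_right this (by positivity)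
        _ = 1/8 := by field_simp
    linarith
  -- conclude
  have hstep : (4/(5*(K:ℝ))) * ∑ v ∈ S, ‖α v‖^2
      ≤ ∑ v, ‖α v‖^2 * (((1:ℝ)/K) * ‖∑ j', β v j' * c j'‖^2) := by
    rw [Finset.mul_sum]
    refine Finset.sum_le_sum_of_subset_of_nonneg (Finset.subset_univ S) ?_ |>.trans' ?_
    · intro i _ _
      positivity
    · refine Finset.sum_le_sum fun i hi => ?_
      have hhv := (Finset.mem_filter.mp hi).2
      have hk := key i hhv
      have h0 : (0:ℝ) ≤ ‖α i‖^2 := sq_nonneg _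
      calc (4/(5*(K:ℝ))) * ‖α i‖^2 = ‖α i‖^2 * (((1:ℝ)/K) * (4/5)) := by ring
        _ ≤ ‖α i‖^2 * (((1:ℝ)/K) * ‖∑ j', β i j' * c j'‖^2) :=
            mul_le_mul_of_nonneg_left (mul_le_mul_of_nonneg_left hk (by positivity)) h0
  have hfinal : (1:ℝ)/(4*K) ≤ (4/(5*(K:ℝ))) * ∑ v ∈ S, ‖α v‖^2 := by
    calc (1:ℝ)/(4*K) ≤ (4/(5*(K:ℝ))) * (7/8) := by
          rw [show (4/(5*(K:ℝ))) * (7/8) = 7/(10*K) by ring,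
            div_le_div_iff₀ (by positivity) (by positivity)]
          nlinarith
      _ ≤ _ := mul_le_mul_of_nonneg_left hSmass (by positivity)
  exact hfinal.trans hstep
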